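/- Let K = Z_N and L ⊆ Z_N. The Gabor system G(g, L × Z_N) is a frame for ℂ^N if and only if Σ_{ℓ∈L} |ĝ[j−ℓ]|² > 0 for every j ∈ Z_N, where ĝ = F_N g is the discrete Fourier transform of g; moreover its frame operator is unitarily similar via F_N to the diagonal matrix with entries N·Σ_{ℓ∈L} |ĝ[j−ℓ]|². -/

import Mathlib

open Finset Matrix

noncomputable def zeta (N : ℕ) : ℂ := Complex.exp (2 * Real.pi * Complex.I / N)

/-- The DFT `(F_N x)[k] = (1/√N) ∑_j x[j] ζ_N^{−kj}`. -/
noncomputable def dft (N : ℕ) [NeZero N] (x : ZMod N → ℂ) : ZMod N → ℂ :=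
  fun k => (1 / Real.sqrt N : ℂ) *
    ∑ j : ZMod N, x j * zeta N ^ (-((k.val * j.val : ℕ) : ℤ))

noncomputable def EE (N : ℕ) (x : ZMod N) : ℂ := zeta N ^ x.val

section helpers
variable (N : ℕ) [NeZero N]

lemma EE_def (x : ZMod N) : EE N x = zeta N ^ x.val := rfl

lemma zeta_prim : IsPrimitiveRoot (zeta N) N :=
  Complex.isPrimitiveRoot_exp N (NeZero.ne N)

lemma zeta_pow_N : zeta N ^ N = 1 := (zeta_prim N).pow_eq_one

lemma zeta_ne_zero : zeta N ≠ 0 := Complex.exp_ne_zero _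

lemma EE_pow (m : ℕ) : zeta N ^ m = EE N (m : ZMod N) := by
  rw [EE, ZMod.val_natCast, ← pow_eq_pow_mod m (zeta_pow_N N)]

lemma EE_add (a b : ZMod N) : EE N (a + b) = EE N a * EE N b := by
  rw [EE, EE, EE, ZMod.val_add, ← pow_eq_pow_mod _ (zeta_pow_N N), pow_add]

lemma EE_zero : EE N 0 = 1 := by simp [EE]

lemma EE_mul_neg (a : ZMod N) : EE N a * EE N (-a) = 1 := by
  rw [← EE_add, add_neg_cancel, EE_zero]

lemma EE_ne_zero (a : ZMod N) : EE N a ≠ 0 := pow_ne_zero _ (zeta_ne_zero N)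

lemma EE_neg (a : ZMod N) : EE N (-a) = (EE N a)⁻¹ :=
  eq_inv_of_mul_eq_one_left (by rw [mul_comm] at *; exact EE_mul_neg N a)

lemma star_zeta : (starRingEnd ℂ) (zeta N) = (zeta N)⁻¹ := by
  rw [zeta, ← Complex.exp_conj, ← Complex.exp_neg]
  congr 1
  simp only [map_div₀, _root_.map_mul, Complex.conj_I, Complex.conj_ofReal, map_ofNat,
    Complex.conj_natCast]
  ring

lemma star_EE (a : ZMod N) : (starRingEnd ℂ) (EE N a) = EE N (-a) := by
  rw [EE, map_pow, star_zeta, inv_pow, ← EE, EE_neg]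

lemma zpow_neg_EE (a b : ZMod N) :
    zeta N ^ (-((a.val * b.val : ℕ) : ℤ)) = EE N (-(a * b)) := by
  rw [_root_.zpow_neg, zpow_natCast, EE_pow, EE_neg]
  push_cast
  rw [ZMod.natCast_val, ZMod.natCast_val, ZMod.cast_id, ZMod.cast_id]

lemma EE_eq_one_iff (c : ZMod N) : EE N c = 1 ↔ c = 0 := by
  rw [EE, (zeta_prim N).pow_eq_one_iff_dvd]
  constructor
  · intro h
    have := Nat.eq_zero_of_dvd_of_lt h ?_
    · exact (ZMod.val_eq_zero c).mp this
    · exact ZMod.val_lt c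
  · rintro rfl; simp

lemma sum_EE (c : ZMod N) : ∑ j : ZMod N, EE N (c * j) = if c = 0 then (N : ℂ) else 0 := by
  split_ifs with h
  · subst h; simp [EE_zero, ZMod.card]
  · have h1 : EE N c ≠ 1 := fun hc => h ((EE_eq_one_iff N c).mp hc)
    have key : EE N c * ∑ j : ZMod N, EE N (c * j) = ∑ j : ZMod N, EE N (c * j) := by
      rw [Finset.mul_sum]
      refine Fintype.sum_equiv (Equiv.addRight (1 : ZMod N)) _ _ fun j => ?_
      simp only [Equiv.coe_addRight]
      rw [← EE_add]
      ring_nf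
    have := sub_eq_zero.mpr key
    rw [← sub_one_mul] at this
    rcases mul_eq_zero.mp this with h2 | h2
    · exact absurd (by linear_combination h2) h1
    · exact h2

lemma sqrt_ne_zero' : (Real.sqrt N : ℂ) ≠ 0 := by
  have : (0:ℝ) < Real.sqrt N :=
    Real.sqrt_pos.mpr (by exact_mod_cast Nat.pos_of_ne_zero (NeZero.ne N))
  exact_mod_cast ne_of_gt this

lemma one_div_sqrt_mul : (1 / Real.sqrt N : ℂ) * (Real.sqrt N : ℂ) = 1 :=
  one_div_mul_cancel (sqrt_ne_zero' N)

lemma dft_eq (g : ZMod N → ℂ) (c : ZMod N) :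
    dft N g c = (1 / Real.sqrt N : ℂ) * ∑ j : ZMod N, EE N (-(c * j)) * g j := by
  rw [dft]
  congr 1
  exact Finset.sum_congr rfl fun j _ => by rw [zpow_neg_EE, mul_comm]

lemma sum_eq_dft (g : ZMod N → ℂ) (c : ZMod N) :
    ∑ t : ZMod N, EE N (c * t) * g t = (Real.sqrt N : ℂ) * dft N g (-c) := by
  rw [dft_eq, ← mul_assoc, mul_comm ((Real.sqrt N : ℂ)), one_div_sqrt_mul, one_mul]
  simp only [neg_mul, neg_neg]

lemma swap4 {M : Type*} [AddCommMonoid M] {ι : Type*} [Fintype ι] {γ : Type*} (L : Finset γ)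
    (f : ι → ι → ι → γ → M) :
    ∑ j, ∑ i, ∑ k, ∑ ℓ ∈ L, f i j k ℓ = ∑ ℓ ∈ L, ∑ k, ∑ i, ∑ j, f i j k ℓ :=
  calc ∑ j, ∑ i, ∑ k, ∑ ℓ ∈ L, f i j k ℓ
      = ∑ j, ∑ i, ∑ ℓ ∈ L, ∑ k, f i j k ℓ :=
        Finset.sum_congr rfl fun _ _ => Finset.sum_congr rfl fun _ _ => Finset.sum_comm
    _ = ∑ j, ∑ ℓ ∈ L, ∑ i, ∑ k, f i j k ℓ := Finset.sum_congr rfl fun _ _ => Finset.sum_comm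
    _ = ∑ ℓ ∈ L, ∑ j, ∑ i, ∑ k, f i j k ℓ := Finset.sum_comm
    _ = ∑ ℓ ∈ L, ∑ j, ∑ k, ∑ i, f i j k ℓ :=
        Finset.sum_congr rfl fun _ _ => Finset.sum_congr rfl fun _ _ => Finset.sum_comm
    _ = ∑ ℓ ∈ L, ∑ k, ∑ j, ∑ i, f i j k ℓ := Finset.sum_congr rfl fun _ _ => Finset.sum_comm
    _ = ∑ ℓ ∈ L, ∑ k, ∑ i, ∑ j, f i j k ℓ :=
        Finset.sum_congr rfl fun _ _ => Finset.sum_congr rfl fun _ _ => Finset.sum_comm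

lemma key_shift (g : ZMod N → ℂ) (c k : ZMod N) :
    ∑ i : ZMod N, EE N (c * i) * g (i - k) = EE N (c * k) * ∑ t : ZMod N, EE N (c * t) * g t := by
  calc ∑ i : ZMod N, EE N (c * i) * g (i - k)
      = ∑ t : ZMod N, EE N (c * (t + k)) * g (t + k - k) :=
        (Equiv.sum_comp (Equiv.addRight k) (fun i => EE N (c * i) * g (i - k))).symm
    _ = EE N (c * k) * ∑ t : ZMod N, EE N (c * t) * g t := by
        rw [Finset.mul_sum]
        refine Finset.sum_congr rfl fun t _ => ?_
        rw [add_sub_cancel_right, mul_add, EE_add]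
        ring

lemma sumA (g : ZMod N → ℂ) (c k : ZMod N) :
    ∑ i : ZMod N, (1 / Real.sqrt N : ℂ) * (EE N (c * i) * g (i - k))
      = EE N (c * k) * dft N g (-c) := by
  rw [← Finset.mul_sum, key_shift, sum_eq_dft]
  have h := one_div_sqrt_mul N
  linear_combination EE N (c * k) * dft N g (-c) * h

lemma dft_star (g : ZMod N → ℂ) (c : ZMod N) :
    dft N (fun t => (starRingEnd ℂ) (g t)) (-c) = (starRingEnd ℂ) (dft N g c) := by
  rw [dft_eq, dft_eq, _root_.map_mul, map_sum]
  have h1 : (starRingEnd ℂ) (1 / Real.sqrt N : ℂ) = (1 / Real.sqrt N : ℂ) := by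
    rw [map_div₀, _root_.map_one, Complex.conj_ofReal]
  rw [h1]
  congr 1
  refine Finset.sum_congr rfl fun j _ => ?_
  rw [_root_.map_mul, star_EE]
  simp only [neg_mul, neg_neg]

lemma key_reflect (g : ZMod N → ℂ) (m j : ZMod N) :
    ∑ k : ZMod N, EE N (-(m * k)) * g (j - k)
      = EE N (-(m * j)) * ((Real.sqrt N : ℂ) * dft N g (-m)) := by
  calc ∑ k : ZMod N, EE N (-(m * k)) * g (j - k)
      = ∑ t : ZMod N, EE N (-(m * (j - t))) * g (j - (j - t)) :=
        (Equiv.sum_comp (Equiv.subLeft j) (fun k => EE N (-(m * k)) * g (j - k))).symm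
    _ = EE N (-(m * j)) * ∑ t : ZMod N, EE N (m * t) * g t := by
        rw [Finset.mul_sum]
        refine Finset.sum_congr rfl fun t _ => ?_
        have h : EE N (-(m * j)) * EE N (m * t) = EE N (-(m * (j - t))) := by
          rw [← EE_add]; congr 1; ring
        rw [sub_sub_cancel]
        linear_combination (-(g t)) * h
    _ = EE N (-(m * j)) * ((Real.sqrt N : ℂ) * dft N g (-m)) := by rw [sum_eq_dft]

end helpers

section matrixpart
variable (N : ℕ) [NeZero N]

lemma star_invsqrt : (starRingEnd ℂ) (1 / Real.sqrt N : ℂ) = (1 / Real.sqrt N : ℂ) := by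
  rw [map_div₀, _root_.map_one, Complex.conj_ofReal]

lemma matrix_diag (g : ZMod N → ℂ) (L : Finset (ZMod N)) (a b : ZMod N) :
    ∑ j : ZMod N, (∑ i : ZMod N, ((1 / Real.sqrt N : ℂ) * zeta N ^ (-((a.val * i.val : ℕ) : ℤ))) *
        (∑ k : ZMod N, ∑ ℓ ∈ L, (zeta N ^ ((ℓ * i).val) * g (i - k)) *
          (starRingEnd ℂ) (zeta N ^ ((ℓ * j).val) * g (j - k)))) *
      (starRingEnd ℂ) ((1 / Real.sqrt N : ℂ) * zeta N ^ (-((b.val * j.val : ℕ) : ℤ)))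
    = if a = b then (N : ℂ) * ∑ ℓ ∈ L, ((‖dft N g (a - ℓ)‖ : ℝ) : ℂ) ^ 2 else 0 := by
  calc ∑ j : ZMod N, (∑ i : ZMod N,
        ((1 / Real.sqrt N : ℂ) * zeta N ^ (-((a.val * i.val : ℕ) : ℤ))) *
        (∑ k : ZMod N, ∑ ℓ ∈ L, (zeta N ^ ((ℓ * i).val) * g (i - k)) *
          (starRingEnd ℂ) (zeta N ^ ((ℓ * j).val) * g (j - k)))) *
      (starRingEnd ℂ) ((1 / Real.sqrt N : ℂ) * zeta N ^ (-((b.val * j.val : ℕ) : ℤ)))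
      = ∑ j : ZMod N, ∑ i : ZMod N, ∑ k : ZMod N, ∑ ℓ ∈ L,
          ((1 / Real.sqrt N : ℂ) * (EE N ((ℓ - a) * i) * g (i - k))) *
          ((1 / Real.sqrt N : ℂ) * (EE N ((b - ℓ) * j) * (starRingEnd ℂ) (g (j - k)))) := by
        simp only [zpow_neg_EE, ← EE_def, _root_.map_mul, star_EE, star_invsqrt, neg_neg,
          Finset.mul_sum, Finset.sum_mul]
        refine Finset.sum_congr rfl fun j _ => Finset.sum_congr rfl fun i _ =>
          Finset.sum_congr rfl fun k _ => Finset.sum_congr rfl fun ℓ _ => ?_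
        have h1 : EE N (-(a * i)) * EE N (ℓ * i) = EE N ((ℓ - a) * i) := by
          rw [← EE_add]; congr 1; ring
        have h2 : EE N (-(ℓ * j)) * EE N (b * j) = EE N ((b - ℓ) * j) := by
          rw [← EE_add]; congr 1; ring
        linear_combination ((1 / Real.sqrt N : ℂ) * (1 / Real.sqrt N : ℂ) * g (i - k) *
            (starRingEnd ℂ) (g (j - k)) * EE N (-(ℓ * j)) * EE N (b * j)) * h1 +
          ((1 / Real.sqrt N : ℂ) * (1 / Real.sqrt N : ℂ) * g (i - k) *
            (starRingEnd ℂ) (g (j - k)) * EE N ((ℓ - a) * i)) * h2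
    _ = ∑ ℓ ∈ L, ∑ k : ZMod N, ∑ i : ZMod N, ∑ j : ZMod N,
          ((1 / Real.sqrt N : ℂ) * (EE N ((ℓ - a) * i) * g (i - k))) *
          ((1 / Real.sqrt N : ℂ) * (EE N ((b - ℓ) * j) * (starRingEnd ℂ) (g (j - k)))) :=
        swap4 L _
    _ = ∑ ℓ ∈ L, ∑ k : ZMod N,
          (∑ i : ZMod N, (1 / Real.sqrt N : ℂ) * (EE N ((ℓ - a) * i) * g (i - k))) *
          (∑ j : ZMod N, (1 / Real.sqrt N : ℂ) *
            (EE N ((b - ℓ) * j) * (starRingEnd ℂ) (g (j - k)))) := by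
        refine Finset.sum_congr rfl fun ℓ _ => Finset.sum_congr rfl fun k _ => ?_
        rw [Finset.sum_mul_sum]
    _ = ∑ ℓ ∈ L, ∑ k : ZMod N,
          (EE N ((ℓ - a) * k) * dft N g (a - ℓ)) *
          (EE N ((b - ℓ) * k) * (starRingEnd ℂ) (dft N g (b - ℓ))) := by
        refine Finset.sum_congr rfl fun ℓ _ => Finset.sum_congr rfl fun k _ => ?_
        rw [sumA, neg_sub, sumA N (fun t => (starRingEnd ℂ) (g t)) (b - ℓ) k, dft_star]
    _ = ∑ ℓ ∈ L, (dft N g (a - ℓ) * (starRingEnd ℂ) (dft N g (b - ℓ))) *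
          ∑ k : ZMod N, EE N ((b - a) * k) := by
        refine Finset.sum_congr rfl fun ℓ _ => ?_
        rw [Finset.mul_sum]
        refine Finset.sum_congr rfl fun k _ => ?_
        have h : EE N ((ℓ - a) * k) * EE N ((b - ℓ) * k) = EE N ((b - a) * k) := by
          rw [← EE_add]; congr 1; ring
        linear_combination (dft N g (a - ℓ) * (starRingEnd ℂ) (dft N g (b - ℓ))) * h
    _ = if a = b then (N : ℂ) * ∑ ℓ ∈ L, ((‖dft N g (a - ℓ)‖ : ℝ) : ℂ) ^ 2 else 0 := by
        rw [sum_EE]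
        by_cases hab : a = b
        · subst hab
          rw [if_pos (sub_self a), if_pos rfl, Finset.mul_sum]
          refine Finset.sum_congr rfl fun ℓ _ => ?_
          rw [Complex.mul_conj, Complex.normSq_eq_norm_sq]
          push_cast
          ring
        · rw [if_neg (fun h => hab (sub_eq_zero.mp h).symm), if_neg hab]
          simp

end matrixpart

section spanpart
variable (N : ℕ) [NeZero N]

/-- The pairing functional `v ↦ ∑ j, v j * EE N (-(m*j))`. -/
noncomputable def pairE (m : ZMod N) : (ZMod N → ℂ) →ₗ[ℂ] ℂ where
  toFun v := ∑ j : ZMod N, v j * EE N (-(m * j))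
  map_add' x y := by simp [add_mul, Finset.sum_add_distrib]
  map_smul' c x := by simp [Finset.mul_sum, mul_assoc]

lemma span_iff (g : ZMod N → ℂ) (L : Finset (ZMod N)) :
    Submodule.span ℂ
        {v : ZMod N → ℂ | ∃ ℓ ∈ L, ∃ k : ZMod N,
          v = fun j => zeta N ^ ((ℓ * j).val) * g (j - k)} = ⊤ ↔
      ∀ j : ZMod N, 0 < ∑ ℓ ∈ L, ‖dft N g (j - ℓ)‖ ^ 2 := by
  constructor
  · intro hspan j₀
    by_contra hpos
    -- the sum is zero, so every `dft N g (j₀ - ℓ) = 0`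
    have hsum0 : ∑ ℓ ∈ L, ‖dft N g (j₀ - ℓ)‖ ^ 2 = 0 := by
      have h1 : ∀ ℓ ∈ L, (0:ℝ) ≤ ‖dft N g (j₀ - ℓ)‖ ^ 2 := fun ℓ _ => sq_nonneg _
      rcases (Finset.sum_nonneg h1).lt_or_eq with h | h
      · exact absurd h hpos
      · exact h.symm
    have hz : ∀ ℓ ∈ L, dft N g (j₀ - ℓ) = 0 := by
      intro ℓ hℓ
      have := (Finset.sum_eq_zero_iff_of_nonneg
        (fun ℓ _ => sq_nonneg ‖dft N g (j₀ - ℓ)‖)).mp hsum0 ℓ hℓ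
      have := sq_eq_zero_iff.mp this
      simpa using this
    -- the functional `pairE j₀` kills every generator
    have hker : ∀ v ∈ {v : ZMod N → ℂ | ∃ ℓ ∈ L, ∃ k : ZMod N,
        v = fun j => zeta N ^ ((ℓ * j).val) * g (j - k)}, v ∈ LinearMap.ker (pairE N j₀) := by
      rintro v ⟨ℓ, hℓ, k, rfl⟩
      have : pairE N j₀ (fun j => zeta N ^ ((ℓ * j).val) * g (j - k))
          = ∑ j : ZMod N, EE N ((ℓ - j₀) * j) * g (j - k) := by
        show ∑ j : ZMod N, (zeta N ^ ((ℓ * j).val) * g (j - k)) * EE N (-(j₀ * j)) = _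
        refine Finset.sum_congr rfl fun j _ => ?_
        have h : EE N (ℓ * j) * EE N (-(j₀ * j)) = EE N ((ℓ - j₀) * j) := by
          rw [← EE_add]; congr 1; ring
        rw [← EE_def]
        linear_combination g (j - k) * h
      rw [LinearMap.mem_ker, this, key_shift, sum_eq_dft, neg_sub, hz ℓ hℓ, mul_zero, mul_zero]
    have htop : (⊤ : Submodule ℂ (ZMod N → ℂ)) ≤ LinearMap.ker (pairE N j₀) := by
      rw [← hspan]
      exact Submodule.span_le.mpr hker
    have h1 : pairE N j₀ (fun j => if j = 0 then (1:ℂ) else 0) = 0 :=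
      htop (Submodule.mem_top) -- membership gives value zero
    have h2 : pairE N j₀ (fun j => if j = 0 then (1:ℂ) else 0) = 1 := by
      show ∑ j : ZMod N, (if j = 0 then (1:ℂ) else 0) * EE N (-(j₀ * j)) = 1
      rw [Finset.sum_eq_single (0 : ZMod N)]
      · simp [EE_zero]
      · intro b _ hb; simp [hb]
      · intro h; exact absurd (Finset.mem_univ _) h
    rw [h1] at h2
    exact zero_ne_one h2
  · intro hpos
    by_contra hne
    obtain ⟨x, hx⟩ : ∃ x, x ∉ Submodule.span ℂ
        {v : ZMod N → ℂ | ∃ ℓ ∈ L, ∃ k : ZMod N,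
          v = fun j => zeta N ^ ((ℓ * j).val) * g (j - k)} := by
      by_contra h
      push_neg at h
      exact hne (Submodule.eq_top_iff'.mpr h)
    set p := Submodule.span ℂ
        {v : ZMod N → ℂ | ∃ ℓ ∈ L, ∃ k : ZMod N,
          v = fun j => zeta N ^ ((ℓ * j).val) * g (j - k)} with hp
    -- find a functional vanishing on p but not at x
    have hqx : Submodule.Quotient.mk (p := p) x ≠ 0 := by
      simpa [Submodule.Quotient.mk_eq_zero] using hx
    obtain ⟨ψ, hψ⟩ : ∃ ψ : Module.Dual ℂ (_ ⧸ p), ψ (Submodule.Quotient.mk x) ≠ 0 := by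
      by_contra h
      push_neg at h
      exact hqx ((Module.forall_dual_apply_eq_zero_iff ℂ _).mp h)
    set φ : (ZMod N → ℂ) →ₗ[ℂ] ℂ := ψ.comp p.mkQ with hφ
    have hφp : ∀ v ∈ p, φ v = 0 := by
      intro v hv
      simp [hφ, Submodule.mkQ_apply, (Submodule.Quotient.mk_eq_zero p).mpr hv]
    have hφx : φ x ≠ 0 := hψ
    set c : ZMod N → ℂ := fun j => φ (fun j' => if j = j' then 1 else 0) with hc
    have hrep : ∀ v : ZMod N → ℂ, φ v = ∑ j : ZMod N, v j * c j := by
      intro v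
      conv_lhs => rw [pi_eq_sum_univ v, map_sum]
      exact Finset.sum_congr rfl fun j _ => by rw [_root_.map_smul, smul_eq_mul]
    -- φ kills every generator
    have hgen : ∀ ℓ ∈ L, ∀ k : ZMod N, ∑ j : ZMod N, (EE N (ℓ * j) * g (j - k)) * c j = 0 := by
      intro ℓ hℓ k
      have hv : (fun j => zeta N ^ ((ℓ * j).val) * g (j - k)) ∈ p :=
        Submodule.subset_span ⟨ℓ, hℓ, k, rfl⟩
      have := hφp _ hv
      rwa [hrep] at this
    -- Fourier coefficients of c vanish
    have hC : ∀ q : ZMod N, ∑ j : ZMod N, EE N (-(q * j)) * c j = 0 := by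
      intro q
      obtain ⟨ℓ₀, hℓ₀, hd⟩ : ∃ ℓ ∈ L, dft N g (-q - ℓ) ≠ 0 := by
        by_contra h
        push_neg at h
        have hz : ∑ ℓ ∈ L, ‖dft N g (-q - ℓ)‖ ^ 2 = 0 :=
          Finset.sum_eq_zero fun ℓ hℓ => by rw [h ℓ hℓ]; simp
        exact lt_irrefl (0:ℝ) (hz ▸ hpos (-q))
      have key0 : ∑ k : ZMod N, EE N (-((ℓ₀ + q) * k)) *
          (∑ j : ZMod N, (EE N (ℓ₀ * j) * g (j - k)) * c j) = 0 :=
        Finset.sum_eq_zero fun k _ => by rw [hgen ℓ₀ hℓ₀ k, mul_zero]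
      have key1 : ∑ k : ZMod N, EE N (-((ℓ₀ + q) * k)) *
          (∑ j : ZMod N, (EE N (ℓ₀ * j) * g (j - k)) * c j)
          = ((Real.sqrt N : ℂ) * dft N g (-(ℓ₀ + q))) *
            ∑ j : ZMod N, EE N (-(q * j)) * c j := by
        calc ∑ k : ZMod N, EE N (-((ℓ₀ + q) * k)) *
              (∑ j : ZMod N, (EE N (ℓ₀ * j) * g (j - k)) * c j)
            = ∑ k : ZMod N, ∑ j : ZMod N,
                EE N (-((ℓ₀ + q) * k)) * ((EE N (ℓ₀ * j) * g (j - k)) * c j) :=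
              Finset.sum_congr rfl fun k _ => Finset.mul_sum _ _ _
          _ = ∑ j : ZMod N, ∑ k : ZMod N,
                EE N (-((ℓ₀ + q) * k)) * ((EE N (ℓ₀ * j) * g (j - k)) * c j) := Finset.sum_comm
          _ = ∑ j : ZMod N, (EE N (ℓ₀ * j) * c j) *
                ∑ k : ZMod N, EE N (-((ℓ₀ + q) * k)) * g (j - k) := by
              refine Finset.sum_congr rfl fun j _ => ?_
              rw [Finset.mul_sum]
              exact Finset.sum_congr rfl fun k _ => by ring
          _ = ∑ j : ZMod N, (EE N (ℓ₀ * j) * c j) *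
                (EE N (-((ℓ₀ + q) * j)) * ((Real.sqrt N : ℂ) * dft N g (-(ℓ₀ + q)))) := by
              refine Finset.sum_congr rfl fun j _ => ?_
              rw [key_reflect]
          _ = ((Real.sqrt N : ℂ) * dft N g (-(ℓ₀ + q))) *
                ∑ j : ZMod N, EE N (-(q * j)) * c j := by
              rw [Finset.mul_sum]
              refine Finset.sum_congr rfl fun j _ => ?_
              have h : EE N (ℓ₀ * j) * EE N (-((ℓ₀ + q) * j)) = EE N (-(q * j)) := by
                rw [← EE_add]; congr 1; ring
              linear_combination ((Real.sqrt N : ℂ) * dft N g (-(ℓ₀ + q)) * c j) * h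
      have hprod := key1 ▸ key0
      have hd' : dft N g (-(ℓ₀ + q)) ≠ 0 := by
        rwa [show -(ℓ₀ + q) = -q - ℓ₀ by ring]
      have hfac : (Real.sqrt N : ℂ) * dft N g (-(ℓ₀ + q)) ≠ 0 :=
        mul_ne_zero (sqrt_ne_zero' N) hd'
      exact (mul_eq_zero.mp hprod).resolve_left hfac
    -- inversion: c = 0
    have hc0 : ∀ j' : ZMod N, c j' = 0 := by
      intro j'
      have h1 : ∑ q : ZMod N, EE N (q * j') * (∑ j : ZMod N, EE N (-(q * j)) * c j) = 0 :=
        Finset.sum_eq_zero fun q _ => by rw [hC q, mul_zero]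
      have h2 : ∑ q : ZMod N, EE N (q * j') * (∑ j : ZMod N, EE N (-(q * j)) * c j)
          = (N : ℂ) * c j' := by
        calc ∑ q : ZMod N, EE N (q * j') * (∑ j : ZMod N, EE N (-(q * j)) * c j)
            = ∑ q : ZMod N, ∑ j : ZMod N, EE N (q * j') * (EE N (-(q * j)) * c j) :=
              Finset.sum_congr rfl fun q _ => Finset.mul_sum _ _ _
          _ = ∑ j : ZMod N, ∑ q : ZMod N, EE N (q * j') * (EE N (-(q * j)) * c j) :=
              Finset.sum_comm
          _ = ∑ j : ZMod N, c j * ∑ q : ZMod N, EE N ((j' - j) * q) := by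
              refine Finset.sum_congr rfl fun j _ => ?_
              rw [Finset.mul_sum]
              refine Finset.sum_congr rfl fun q _ => ?_
              have h : EE N (q * j') * EE N (-(q * j)) = EE N ((j' - j) * q) := by
                rw [← EE_add]; congr 1; ring
              linear_combination c j * h
          _ = ∑ j : ZMod N, c j * (if j' - j = 0 then (N : ℂ) else 0) := by
              exact Finset.sum_congr rfl fun j _ => by rw [sum_EE]
          _ = (N : ℂ) * c j' := by
              rw [Finset.sum_eq_single j']
              · simp [mul_comm]
              · intro b _ hb
                have hb' : j' - b ≠ 0 := fun h => hb (sub_eq_zero.mp h).symm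
                rw [if_neg hb', mul_zero]
              · intro h; exact absurd (Finset.mem_univ _) h
      have hN0 : ((N : ℂ)) ≠ 0 := Nat.cast_ne_zero.mpr (NeZero.ne N)
      have := h2 ▸ h1
      exact (mul_eq_zero.mp this).resolve_left hN0
    have : φ x = 0 := by
      rw [hrep]
      simp [hc0]
    exact hφx this

end spanpart

/-- Full set of translations: `G(g, L × Z_N)` is a frame for `ℂ^N` iff
`∑_{ℓ∈L} |ĝ[j−ℓ]|² > 0` for every `j`; moreover its frame operator matrix is
unitarily similar via the DFT matrix to the diagonal matrix with entries
`N·∑_{ℓ∈L} |ĝ[j−ℓ]|²`. -/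
theorem stmt19 (N : ℕ) (hN : 1 < N) [NeZero N] (g : ZMod N → ℂ)
    (L : Finset (ZMod N)) (hL : L.Nonempty) :
    (Submodule.span ℂ
        {v : ZMod N → ℂ | ∃ ℓ ∈ L, ∃ k : ZMod N,
          v = fun j => zeta N ^ ((ℓ * j).val) * g (j - k)} = ⊤ ↔
      ∀ j : ZMod N, 0 < ∑ ℓ ∈ L, ‖dft N g (j - ℓ)‖ ^ 2) ∧
    (Matrix.of fun a b : ZMod N =>
          (1 / Real.sqrt N : ℂ) * zeta N ^ (-((a.val * b.val : ℕ) : ℤ))) *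
        (Matrix.of fun i j : ZMod N =>
          ∑ k : ZMod N, ∑ ℓ ∈ L,
            (zeta N ^ ((ℓ * i).val) * g (i - k)) *
              (starRingEnd ℂ) (zeta N ^ ((ℓ * j).val) * g (j - k))) *
        (Matrix.of fun a b : ZMod N =>
          (1 / Real.sqrt N : ℂ) * zeta N ^ (-((a.val * b.val : ℕ) : ℤ)))ᴴ =
      Matrix.diagonal (fun j : ZMod N =>
        (N : ℂ) * ∑ ℓ ∈ L, ((‖dft N g (j - ℓ)‖ : ℝ) : ℂ) ^ 2) := by
  constructor
  · exact span_iff N g L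
  · ext a b
    simp only [Matrix.mul_apply, Matrix.conjTranspose_apply, Matrix.of_apply,
      Matrix.diagonal_apply, ← starRingEnd_apply]
    exact matrix_diag N g L a b
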